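/- Let α and β be discrete formulas and x_i be a state of a discrete variable X. If variable X does not occur in both α and β (i.e., X occurs in at most one of them), then universal state quantification distributes over the disjunction: ∀x_i·(α ∨ β) ≡ (∀x_i·α) ∨ (∀x_i·β). -/

import Mathlib

/-- A discrete formula over variables `V`, where variable `v` has states `σ v`. -/
inductive DForm (V : Type) (σ : V → Type) : Type where
  | top : DForm V σ
  | bot : DForm V σ
  | state : (v : V) → σ v → DForm V σ
  | neg : DForm V σ → DForm V σ
  | conj : DForm V σ → DForm V σ → DForm V σ
  | disj : DForm V σ → DForm V σ → DForm V σ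

namespace DForm

variable {V : Type} {σ : V → Type}

/-- Evaluation of a discrete formula in a world `w`. -/
def eval [∀ v, DecidableEq (σ v)] (w : ∀ v, σ v) : DForm V σ → Bool
  | top => true
  | bot => false
  | state v s => decide (w v = s)
  | neg φ => !(φ.eval w)
  | conj φ ψ => φ.eval w && ψ.eval w
  | disj φ ψ => φ.eval w || ψ.eval w

/-- Two formulas are equivalent when they have the same models. -/
def equiv [∀ v, DecidableEq (σ v)] (φ ψ : DForm V σ) : Prop :=
  ∀ w : ∀ v, σ v, φ.eval w = ψ.eval w

/-- `φ ⊨ ψ`: every model of `φ` is a model of `ψ`. -/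
def entails [∀ v, DecidableEq (σ v)] (φ ψ : DForm V σ) : Prop :=
  ∀ w : ∀ v, σ v, φ.eval w = true → ψ.eval w = true

/-- Conditioning `Δ|x_i`: replace occurrences of `x_i` by `⊤` and of `x_j` (`j ≠ i`) by `⊥`. -/
def cond [DecidableEq V] [∀ v, DecidableEq (σ v)] (v : V) (s : σ v) :
    DForm V σ → DForm V σ
  | top => top
  | bot => bot
  | state u t =>
      if h : u = v then (if h ▸ t = s then top else bot) else state u t
  | neg φ => neg (φ.cond v s)
  | conj φ ψ => conj (φ.cond v s) (ψ.cond v s)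
  | disj φ ψ => disj (φ.cond v s) (ψ.cond v s)

/-- Universal quantification of state `x_i`:
`∀x_i·Δ := (Δ|x_i) ∧ ⋀_{j≠i} (x_i ∨ Δ|x_j)`. -/
noncomputable def quant [DecidableEq V] [∀ v, DecidableEq (σ v)] [∀ v, Fintype (σ v)]
    (v : V) (s : σ v) (Δ : DForm V σ) : DForm V σ :=
  ((Finset.univ.filter (fun j => j ≠ s)).toList).foldr
    (fun j acc => conj (disj (state v s) (Δ.cond v j)) acc) (Δ.cond v s)

/-- The set of variables occurring in a formula. -/
def vars : DForm V σ → Set V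
  | top => ∅
  | bot => ∅
  | state u _ => {u}
  | neg φ => φ.vars
  | conj φ ψ => φ.vars ∪ ψ.vars
  | disj φ ψ => φ.vars ∪ ψ.vars

/-- Whether state `x_i` (the positive literal) occurs in the formula. -/
def stateOccurs (v : V) (s : σ v) : DForm V σ → Prop
  | top => False
  | bot => False
  | state u t => ∃ h : u = v, h ▸ t = s
  | neg φ => φ.stateOccurs v s
  | conj φ ψ => φ.stateOccurs v s ∨ ψ.stateOccurs v s
  | disj φ ψ => φ.stateOccurs v s ∨ ψ.stateOccurs v s

/-- An NNF only negates states (literals). -/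
def isNNF : DForm V σ → Prop
  | top => True
  | bot => True
  | state _ _ => True
  | neg (state _ _) => True
  | neg _ => False
  | conj φ ψ => φ.isNNF ∧ ψ.isNNF
  | disj φ ψ => φ.isNNF ∧ ψ.isNNF

/-- A positive NNF contains no negation at all. -/
def isPositive : DForm V σ → Prop
  | top => True
  | bot => True
  | state _ _ => True
  | neg _ => False
  | conj φ ψ => φ.isPositive ∧ ψ.isPositive
  | disj φ ψ => φ.isPositive ∧ ψ.isPositive

/-- A monotone NNF is positive and has at most one state per variable. -/
def monotone (Δ : DForm V σ) : Prop :=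
  Δ.isPositive ∧ ∀ (v : V) (s t : σ v), Δ.stateOccurs v s → Δ.stateOccurs v t → s = t

/-- ∨-decomposability: disjuncts of every disjunction share no variables. -/
def orDecomposable : DForm V σ → Prop
  | top => True
  | bot => True
  | state _ _ => True
  | neg φ => φ.orDecomposable
  | conj φ ψ => φ.orDecomposable ∧ ψ.orDecomposable
  | disj φ ψ => φ.vars ∩ ψ.vars = ∅ ∧ φ.orDecomposable ∧ ψ.orDecomposable

/-- ∧-decomposability: conjuncts of every conjunction share no variables. -/
def andDecomposable : DForm V σ → Prop
  | top => True
  | bot => True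
  | state _ _ => True
  | neg φ => φ.andDecomposable
  | conj φ ψ => φ.vars ∩ ψ.vars = ∅ ∧ φ.andDecomposable ∧ ψ.andDecomposable
  | disj φ ψ => φ.andDecomposable ∧ ψ.andDecomposable

end DForm

variable {V : Type} {σ : V → Type}

open DForm in
lemma DForm.cond_of_not_mem [DecidableEq V] [∀ v, DecidableEq (σ v)]
    (Δ : DForm V σ) (X : V) (hv : X ∉ Δ.vars) (t : σ X) : Δ.cond X t = Δ := by
  induction Δ with
  | top => rfl
  | bot => rfl
  | state u s =>
    have : u ≠ X := by
      intro h; exact hv (by simp [vars, h])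
    simp [cond, this]
  | neg φ ih => simp [cond, ih hv]
  | conj φ ψ ihφ ihψ =>
    simp only [vars, Set.mem_union] at hv
    push_neg at hv
    simp [cond, ihφ hv.1, ihψ hv.2]
  | disj φ ψ ihφ ihψ =>
    simp only [vars, Set.mem_union] at hv
    push_neg at hv
    simp [cond, ihφ hv.1, ihψ hv.2]

open DForm in
lemma DForm.eval_foldr [DecidableEq V] [∀ v, DecidableEq (σ v)]
    (Δ : DForm V σ) (X : V) (s : σ X) (L : List (σ X)) (base : DForm V σ)
    (w : ∀ v, σ v) :
    (L.foldr (fun j acc => conj (disj (state X s) (Δ.cond X j)) acc) base).eval w =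
      (L.all (fun j => decide (w X = s) || (Δ.cond X j).eval w) && base.eval w) := by
  induction L with
  | nil => simp [eval]
  | cons a L ih => simp [eval, ih, Bool.and_assoc]

open DForm in
/-- If variable `X` does not occur in both `α` and `β`, universal state
quantification distributes over the disjunction. -/
theorem quant_disj_of_not_shared [DecidableEq V] [∀ v, DecidableEq (σ v)] [∀ v, Fintype (σ v)]
    (α β : DForm V σ) (X : V) (i : σ X)
    (h : ¬ (X ∈ α.vars ∧ X ∈ β.vars)) :
    equiv (quant X i (disj α β)) (disj (quant X i α) (quant X i β)) := by
  intro w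
  simp only [quant, eval_foldr, eval]
  rcases not_and_or.mp h with hX | hX
  · simp only [cond_of_not_mem α X hX]
    cases ha : α.eval w <;> simp [ha, DForm.cond, eval, cond_of_not_mem α X hX]
  · simp only [cond_of_not_mem β X hX]
    cases hb : β.eval w <;> simp [hb, DForm.cond, eval, cond_of_not_mem β X hX]
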